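/- Let ℋ be a Hilbert space, H₀ a bounded self-adjoint operator, and t ↦ V(t) a strongly continuous family of bounded operators with ‖V(t)‖ ≤ C⟨t⟩^{-δ} for some δ > 1 and C ≥ 0. Let u : ℝ → ℋ be continuously differentiable with u'(t) = i(H₀ + V(t))u(t) and sup_t ‖u(t)‖ < ∞. Then the limits lim_{t→+∞} e^{-itH₀}u(t) and lim_{t→−∞} e^{-itH₀}u(t) exist in ℋ. -/

import Mathlib

open Filter

open NormedSpace MeasureTheory Set

set_option synthInstance.maxHeartbeats 1000000
set_option maxHeartbeats 1000000

/-- Cook's method / existence of wave data: if `u' = i(H₀ + V(t))u` with `H₀` bounded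
self-adjoint, `V` strongly continuous with short-range decay `‖V(t)‖ ≤ C⟨t⟩^{-δ}`, `δ > 1`,
and `u` bounded, then `e^{-itH₀}u(t)` converges as `t → ±∞`. -/
theorem cook_method_asymptotic_data
    {E : Type*} [NormedAddCommGroup E] [InnerProductSpace ℂ E] [CompleteSpace E]
    (H₀ : E →L[ℂ] E) (hH₀ : IsSelfAdjoint H₀)
    (V : ℝ → (E →L[ℂ] E)) (hVcont : ∀ x : E, Continuous fun t => V t x)
    (δ C : ℝ) (hδ : 1 < δ) (hC : 0 ≤ C)
    (hV : ∀ t : ℝ, ‖V t‖ ≤ C * (1 + t^2) ^ (-δ/2))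
    (u : ℝ → E) (hu : ∀ t, HasDerivAt u (Complex.I • (H₀ + V t) (u t)) t)
    (hbound : ∃ M : ℝ, ∀ t, ‖u t‖ ≤ M) :
    (∃ wp : E, Tendsto
      (fun t : ℝ => NormedSpace.exp ((-(Complex.I * t)) • H₀) (u t)) atTop (nhds wp)) ∧
    (∃ wm : E, Tendsto
      (fun t : ℝ => NormedSpace.exp ((-(Complex.I * t)) • H₀) (u t)) atBot (nhds wm)) := by
  obtain ⟨M, hM⟩ := hbound
  have hM0 : 0 ≤ M := (norm_nonneg _).trans (hM 0)
  set A : E →L[ℂ] E := (-Complex.I) • H₀ with hA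
  have hexp_eq : ∀ t : ℝ, ((-(Complex.I * t)) • H₀ : E →L[ℂ] E) = t • A := by
    intro t
    rw [hA, ← algebraMap_smul ℂ t ((-Complex.I) • H₀ : E →L[ℂ] E), smul_smul]
    congr 1
    simp [Complex.ext_iff]
  set B : ℝ → (E →L[ℂ] E) := fun t => exp (t • A) with hBdef
  set w : ℝ → E := fun t => B t (u t) with hw
  -- exp(tA) is a contraction
  have hstar : star A = -A := by
    rw [hA, star_smul, hH₀.star_eq]; simp [neg_smul]
  have hBnorm : ∀ t : ℝ, ‖B t‖ ≤ 1 := by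
    intro t
    have hsA : star (t • A) = -(t • A) := by rw [star_smul, hstar]; simp
    have h1 : B t * star (B t) = 1 := by
      letI : NormedAlgebra ℚ (E →L[ℂ] E) := .restrictScalars ℚ ℂ _
      rw [hBdef, star_exp, hsA,
        ← NormedSpace.exp_add_of_commute (Commute.neg_right (Commute.refl _))]
      simp [NormedSpace.exp_zero]
    have h2 : ‖B t‖ * ‖B t‖ = ‖B t * star (B t)‖ := (CStarRing.norm_self_mul_star).symm
    rw [h1] at h2
    have h3 : ‖(1 : E →L[ℂ] E)‖ ≤ 1 := ContinuousLinearMap.norm_id_le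
    nlinarith [norm_nonneg (B t)]
  -- derivative of B
  have hB : ∀ t : ℝ, HasDerivAt B (B t * A) t := by
    intro t
    have := hasDerivAt_exp_smul_const (𝕂 := ℝ) A t
    exact this
  -- derivative of w
  set R : (E →L[ℂ] E) →L[ℝ] (E →L[ℝ] E) :=
    (ContinuousLinearMap.restrictScalarsIsometry ℂ E E ℝ ℝ).toContinuousLinearMap with hR
  have hw' : ∀ t : ℝ, HasDerivAt w (B t (Complex.I • V t (u t))) t := by
    intro t
    have hBr : HasDerivAt (fun s => R (B s)) (R (B t * A)) t :=
      R.hasFDerivAt.comp_hasDerivAt t (hB t)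
    have h := hBr.clm_apply (hu t)
    have hRapp : ∀ (X : E →L[ℂ] E) (x : E), R X x = X x := fun X x => rfl
    simp only [hRapp] at h
    have key : (B t * A) (u t) + (B t) (Complex.I • (H₀ + V t) (u t))
        = B t (Complex.I • V t (u t)) := by
      rw [ContinuousLinearMap.mul_apply, ← map_add]
      congr 1
      simp only [hA, ContinuousLinearMap.smul_apply, ContinuousLinearMap.add_apply,
        ContinuousLinearMap.neg_apply, smul_add, neg_smul]
      abel
    rw [key] at h
    exact h
  set D : ℝ → E := fun t => B t (Complex.I • V t (u t)) with hD
  -- bound on the derivative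
  have hDbound : ∀ t : ℝ, ‖D t‖ ≤ C * M * (1 + t^2) ^ (-δ/2) := by
    intro t
    have h1 : ‖D t‖ ≤ ‖B t‖ * ‖Complex.I • V t (u t)‖ := (B t).le_opNorm _
    have h2 : ‖Complex.I • V t (u t)‖ = ‖V t (u t)‖ := by
      rw [norm_smul, Complex.norm_I, one_mul]
    have h3 : ‖V t (u t)‖ ≤ ‖V t‖ * ‖u t‖ := (V t).le_opNorm _
    have h4 : ‖V t‖ * ‖u t‖ ≤ (C * (1 + t^2) ^ (-δ/2)) * M :=
      mul_le_mul (hV t) (hM t) (norm_nonneg _) (by positivity)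
    calc ‖D t‖ ≤ ‖B t‖ * ‖V t (u t)‖ := by rwa [h2] at h1
      _ ≤ 1 * ((C * (1 + t^2) ^ (-δ/2)) * M) :=
          mul_le_mul (hBnorm t) (h3.trans h4) (norm_nonneg _) zero_le_one
      _ = C * M * (1 + t^2) ^ (-δ/2) := by ring
  -- continuity of D
  have hucont : Continuous u :=
    continuous_iff_continuousAt.2 fun t => (hu t).continuousAt
  have hBcont : Continuous B :=
    continuous_iff_continuousAt.2 fun t => (hB t).continuousAt
  have hVnorm : ∀ t : ℝ, ‖V t‖ ≤ C := by
    intro t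
    refine (hV t).trans ?_
    have h1 : (1 + t^2 : ℝ) ^ (-δ/2) ≤ 1 :=
      Real.rpow_le_one_of_one_le_of_nonpos (by nlinarith [sq_nonneg t]) (by linarith)
    nlinarith
  have hVucont : Continuous fun t => V t (u t) := by
    rw [continuous_iff_continuousAt]
    intro s
    have h1 : Tendsto (fun t => V t (u t) - V t (u s)) (nhds s) (nhds 0) := by
      apply squeeze_zero_norm (f := fun t => V t (u t) - V t (u s))
        (a := fun t => C * ‖u t - u s‖)
      · intro t
        rw [← map_sub]
        exact ((V t).le_opNorm _).trans
          (mul_le_mul_of_nonneg_right (hVnorm t) (norm_nonneg _))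
      · have hsub : Continuous fun t => u t - u s := hucont.sub continuous_const
        have h5 := (hsub.tendsto s).norm
        simp only [sub_self, norm_zero] at h5
        simpa using h5.const_mul C
    have h2 : Tendsto (fun t => V t (u s)) (nhds s) (nhds (V s (u s))) :=
      (hVcont (u s)).tendsto s
    have := h1.add h2
    rw [zero_add] at this
    refine this.congr fun t => by abel
  have hDcont : Continuous D :=
    hBcont.clm_apply (continuous_const.smul hVucont)
  -- integrability of D
  have hgint : Integrable (fun t : ℝ => C * M * (1 + t^2) ^ (-δ/2)) volume := by
    have h0 : Integrable (fun t : ℝ => ((1 : ℝ) + ‖t‖^2) ^ (-δ/2)) volume := by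
      apply integrable_rpow_neg_one_add_norm_sq
      simpa using hδ
    have h1 : Integrable (fun t : ℝ => (1 + t^2) ^ (-δ/2)) volume := by
      refine h0.congr (Eventually.of_forall fun t => ?_)
      simp [Real.norm_eq_abs, sq_abs]
    simpa [mul_comm] using h1.const_mul (C * M)
  have hDint : Integrable D volume :=
    hgint.mono' hDcont.aestronglyMeasurable (Eventually.of_forall hDbound)
  -- FTC
  have hFTC : ∀ t : ℝ, w t = w 0 + ∫ s in (0:ℝ)..t, D s := by
    intro t
    have := intervalIntegral.integral_eq_sub_of_hasDerivAt
      (a := (0:ℝ)) (b := t) (f := w) (f' := D) (fun s _ => hw' s) hDint.intervalIntegrable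
    rw [this]; abel
  constructor
  · refine ⟨w 0 + ∫ s in Ioi (0:ℝ), D s, ?_⟩
    have h := intervalIntegral_tendsto_integral_Ioi (0:ℝ)
      (hDint.integrableOn) tendsto_id
    have := tendsto_const_nhds (x := w 0) (f := atTop (α := ℝ)) |>.add h
    refine Tendsto.congr (fun t => ?_) this
    simp only [id_eq]
    rw [← hFTC t, hexp_eq]
  · refine ⟨w 0 - ∫ s in Iic (0:ℝ), D s, ?_⟩
    have h := intervalIntegral_tendsto_integral_Iic (0:ℝ)
      (hDint.integrableOn) tendsto_id
    have h2 : Tendsto (fun t : ℝ => ∫ s in (0:ℝ)..t, D s) atBot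
        (nhds (-∫ s in Iic (0:ℝ), D s)) := by
      have := h.neg
      refine this.congr fun t => ?_
      simp only [id_eq]
      rw [← intervalIntegral.integral_symm]
    have := tendsto_const_nhds (x := w 0) (f := atBot (α := ℝ)) |>.add h2
    rw [← sub_eq_add_neg] at this
    refine Tendsto.congr (fun t => ?_) this
    rw [← hFTC t, hexp_eq]
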